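/- Let a_1,...,a_{m-1} be a 3-distributable multiset of positive integers with sum S, and let c = λS − μ with 3 ≤ λ ≤ ⌈(S+1)/2⌉, 1 ≤ μ ≤ λ − 1, and cS even. Then every 2-colouring of {0,1,...,2λ−μ−1} admits a monochromatic solution to a_1 x_1 + ... + a_{m-1} x_{m-1} − x_m = (λ−1)S − (μ−1); consequently Rad_2(a_1,...,a_{m-1},−1; c) ≤ 2λ − μ. -/

import Mathlib

/-- `χ` admits a monochromatic solution of `a₁x₁ + ⋯ + a_{m-1}x_{m-1} - x_m = c`
with all variables in `{1,…,N}`. -/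
def MonoSoln {k : ℕ} (a : Fin k → ℕ) (c : ℤ) (r : ℕ) (N : ℕ) (χ : ℤ → Fin r) : Prop :=
  ∃ (x : Fin k → ℤ) (y : ℤ),
    (∀ i, x i ∈ Finset.Icc (1 : ℤ) N) ∧ y ∈ Finset.Icc (1 : ℤ) N ∧
    ((∑ i, (a i : ℤ) * x i) - y = c) ∧ (∀ i, χ (x i) = χ y)

/-- `R` is the `r`-colour Rado number of `a₁x₁ + ⋯ + a_{m-1}x_{m-1} - x_m = c`. -/
def IsRado {k : ℕ} (a : Fin k → ℕ) (c : ℤ) (r : ℕ) (R : ℕ) : Prop :=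
  IsLeast {N : ℕ | ∀ χ : ℤ → Fin r, MonoSoln a c r N χ} R

/-- A multiset `{a 0, …, a (k-1)}` of positive integers is `t`-distributable if for every
multiset of `t` nonnegative integers with the same total sum, the index set can be
partitioned into `t` parts with the prescribed sums. -/
def TDistributable {k : ℕ} (a : Fin k → ℕ) (t : ℕ) : Prop :=
  ∀ σ : Fin t → ℕ, (∑ j, σ j) = (∑ i, a i) →
    ∃ f : Fin k → Fin t, ∀ j, ∑ i ∈ Finset.univ.filter (fun i => f i = j), a i = σ j

lemma fin2_of_ne_of_ne (p q r : Fin 2) (h1 : p ≠ r) (h2 : q ≠ r) : p = q := by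
  have hp := p.isLt; have hq := q.isLt; have hr := r.isLt
  rw [Ne, Fin.ext_iff] at h1 h2
  rw [Fin.ext_iff]
  omega

lemma key_sum {k : ℕ} (a : Fin k → ℕ) (hdist : TDistributable a 3)
    (σ : Fin 3 → ℕ) (hσ : ∑ j, σ j = ∑ i, a i) (v : Fin 3 → ℤ) :
    ∃ x : Fin k → ℤ, (∀ i, ∃ j, x i = v j) ∧
      ∑ i, (a i : ℤ) * x i = ∑ j, (σ j : ℤ) * v j := by
  obtain ⟨f, hf⟩ := hdist σ hσ
  refine ⟨fun i => v (f i), fun i => ⟨f i, rfl⟩, ?_⟩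
  rw [← Finset.sum_fiberwise Finset.univ f (fun i => (a i : ℤ) * v (f i))]
  refine Finset.sum_congr rfl fun j _ => ?_
  have h1 : ∀ i ∈ Finset.univ.filter (fun i => f i = j),
      (a i : ℤ) * v (f i) = (a i : ℤ) * v j := by
    intro i hi
    rw [(Finset.mem_filter.mp hi).2]
  rw [Finset.sum_congr rfl h1, ← Finset.sum_mul]
  congr 1
  rw [← hf j]
  push_cast
  rfl

theorem rado_upper_lambda_mu_2 (k : ℕ) (hk : 0 < k) (a : Fin k → ℕ) (hpos : ∀ i, 0 < a i)
    (hdist : TDistributable a 3) (S : ℕ) (hS : S = ∑ i, a i)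
    (lam mu : ℕ) (hlam1 : 3 ≤ lam) (hlam2 : lam ≤ (S + 2) / 2)
    (hmu1 : 1 ≤ mu) (hmu2 : mu ≤ lam - 1)
    (c : ℤ) (hc : c = (lam : ℤ) * (S : ℤ) - mu) (he : Even (c * S)) :
    (∀ χ : ℤ → Fin 2, ∃ (x : Fin k → ℤ) (y : ℤ),
        (∀ i, x i ∈ Finset.Icc (0 : ℤ) (2 * (lam : ℤ) - mu - 1)) ∧
        y ∈ Finset.Icc (0 : ℤ) (2 * (lam : ℤ) - mu - 1) ∧
        ((∑ i, (a i : ℤ) * x i) - y = ((lam : ℤ) - 1) * (S : ℤ) - ((mu : ℤ) - 1)) ∧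
        (∀ i, χ (x i) = χ y)) ∧
    (∀ χ : ℤ → Fin 2, MonoSoln a c 2 (2 * lam - mu) χ) := by
  have h2l : 2 * lam ≤ S + 2 := by omega
  have hpart1 : ∀ χ : ℤ → Fin 2, ∃ (x : Fin k → ℤ) (y : ℤ),
      (∀ i, x i ∈ Finset.Icc (0 : ℤ) (2 * (lam : ℤ) - mu - 1)) ∧
      y ∈ Finset.Icc (0 : ℤ) (2 * (lam : ℤ) - mu - 1) ∧
      ((∑ i, (a i : ℤ) * x i) - y = ((lam : ℤ) - 1) * (S : ℤ) - ((mu : ℤ) - 1)) ∧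
      (∀ i, χ (x i) = χ y) := by
    intro χ
    obtain ⟨d, hd, hd1⟩ : ∃ d, lam = mu + d ∧ 1 ≤ d := ⟨lam - mu, by omega, by omega⟩
    obtain ⟨e, he'⟩ : ∃ e, S + 2 = 2 * mu + 2 * d + e := ⟨S + 2 - (2 * mu + 2 * d), by omega⟩
    have hlZ : (lam : ℤ) = mu + d := by omega
    have hbuild : ∀ (s0 s1 s2 : ℕ) (v0 v1 v2 y : ℤ),
        s0 + s1 + s2 = S →
        v0 ∈ Finset.Icc (0 : ℤ) (2 * (lam : ℤ) - mu - 1) →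
        v1 ∈ Finset.Icc (0 : ℤ) (2 * (lam : ℤ) - mu - 1) →
        v2 ∈ Finset.Icc (0 : ℤ) (2 * (lam : ℤ) - mu - 1) →
        y ∈ Finset.Icc (0 : ℤ) (2 * (lam : ℤ) - mu - 1) →
        χ v0 = χ y → χ v1 = χ y → χ v2 = χ y →
        ((s0 : ℤ) * v0 + (s1 : ℤ) * v1 + (s2 : ℤ) * v2 - y
          = ((lam : ℤ) - 1) * (S : ℤ) - ((mu : ℤ) - 1)) →
        ∃ (x : Fin k → ℤ) (y' : ℤ),
          (∀ i, x i ∈ Finset.Icc (0 : ℤ) (2 * (lam : ℤ) - mu - 1)) ∧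
          y' ∈ Finset.Icc (0 : ℤ) (2 * (lam : ℤ) - mu - 1) ∧
          ((∑ i, (a i : ℤ) * x i) - y' = ((lam : ℤ) - 1) * (S : ℤ) - ((mu : ℤ) - 1)) ∧
          (∀ i, χ (x i) = χ y') := by
      intro s0 s1 s2 v0 v1 v2 y hs hv0 hv1 hv2 hy hc0 hc1 hc2 heq
      obtain ⟨x, hx1, hx2⟩ := key_sum a hdist ![s0, s1, s2]
        (by rw [Fin.sum_univ_three]; simp only [Matrix.cons_val_zero, Matrix.cons_val_one,
            Matrix.head_cons, Matrix.cons_val_two, Matrix.tail_cons]; omega) ![v0, v1, v2]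
      rw [Fin.sum_univ_three] at hx2
      simp only [Matrix.cons_val_zero, Matrix.cons_val_one, Matrix.head_cons,
        Matrix.cons_val_two, Matrix.tail_cons] at hx2
      refine ⟨x, y, ?_, hy, ?_, ?_⟩
      · intro i
        obtain ⟨j, hj⟩ := hx1 i
        rw [hj]
        fin_cases j
        · simpa using hv0
        · simpa using hv1
        · simpa using hv2
      · rw [hx2]; exact heq
      · intro i
        obtain ⟨j, hj⟩ := hx1 i
        rw [hj]
        fin_cases j
        · simpa using hc0
        · simpa using hc1
        · simpa using hc2
    by_cases h1 : χ ((mu : ℤ) - 1) = χ ((lam : ℤ) - 1)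
    · refine hbuild S 0 0 ((lam : ℤ) - 1) ((lam : ℤ) - 1) ((lam : ℤ) - 1) ((mu : ℤ) - 1)
        (by omega) ?_ ?_ ?_ ?_ h1.symm h1.symm h1.symm ?_
      · simp only [Finset.mem_Icc]; omega
      · simp only [Finset.mem_Icc]; omega
      · simp only [Finset.mem_Icc]; omega
      · simp only [Finset.mem_Icc]; omega
      · push_cast; ring
    by_cases h2 : χ (lam : ℤ) = χ ((lam : ℤ) - 1)
    · have hcol : χ (lam : ℤ) = χ ((lam : ℤ) - 1) := h2
      refine hbuild d (S - d) 0 (lam : ℤ) ((lam : ℤ) - 1) ((lam : ℤ) - 1) ((lam : ℤ) - 1)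
        (by omega) ?_ ?_ ?_ ?_ hcol rfl rfl ?_
      · simp only [Finset.mem_Icc]; omega
      · simp only [Finset.mem_Icc]; omega
      · simp only [Finset.mem_Icc]; omega
      · simp only [Finset.mem_Icc]; omega
      · have hsub : ((S - d : ℕ) : ℤ) = (S : ℤ) - d := by omega
        rw [hsub]
        linear_combination (-1 : ℤ) * hlZ
    by_cases h3 : χ (2 * (lam : ℤ) - mu - 1) = χ ((lam : ℤ) - 1)
    · refine hbuild 1 (S - 1) 0 (2 * (lam : ℤ) - mu - 1) ((lam : ℤ) - 1) ((lam : ℤ) - 1)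
        ((lam : ℤ) - 1) (by omega) ?_ ?_ ?_ ?_ h3 rfl rfl ?_
      · simp only [Finset.mem_Icc]; omega
      · simp only [Finset.mem_Icc]; omega
      · simp only [Finset.mem_Icc]; omega
      · simp only [Finset.mem_Icc]; omega
      · have hsub : ((S - 1 : ℕ) : ℤ) = (S : ℤ) - 1 := by omega
        rw [hsub]
        push_cast
        ring
    -- remaining case: mu-1, lam, 2*lam-mu-1 all have the other colour
    have hA : χ ((mu : ℤ) - 1) = χ (lam : ℤ) := fin2_of_ne_of_ne _ _ _ h1 h2
    have hB : χ ((mu : ℤ) - 1) = χ (2 * (lam : ℤ) - mu - 1) := fin2_of_ne_of_ne _ _ _ h1 h3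
    rcases Nat.even_or_odd S with hE | hO
    · obtain ⟨t, ht⟩ := hE
      have htZ : (S : ℤ) = t + t := by omega
      refine hbuild t t 0 ((mu : ℤ) - 1) (2 * (lam : ℤ) - mu - 1) ((mu : ℤ) - 1)
        ((mu : ℤ) - 1) (by omega) ?_ ?_ ?_ ?_ rfl hB.symm rfl ?_
      · simp only [Finset.mem_Icc]; omega
      · simp only [Finset.mem_Icc]; omega
      · simp only [Finset.mem_Icc]; omega
      · simp only [Finset.mem_Icc]; omega
      · linear_combination ((1 : ℤ) - (lam : ℤ)) * htZ
    · -- S odd, so lam - mu = d is even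
      have hdeven : Even d := by
        have hnS : ¬ Even ((S : ℕ) : ℤ) := by
          rw [Int.even_coe_nat]
          exact (Nat.not_even_iff_odd).mpr hO
        have hc2 : Even c := (Int.even_mul.mp he).resolve_right hnS
        rw [hc, Int.even_sub, Int.even_mul] at hc2
        have hlm : Even lam ↔ Even mu := by
          rw [← Int.even_coe_nat, ← Int.even_coe_nat]
          tauto
        have hadd := Nat.even_add (m := mu) (n := d)
        rw [← hd] at hadd
        tauto
      obtain ⟨u, hu⟩ := hdeven
      obtain ⟨m, hm⟩ : ∃ m, mu = m + 1 := ⟨mu - 1, by omega⟩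
      obtain ⟨w, hw⟩ : ∃ w, e = 2 * w + 1 := by
        rw [Nat.odd_iff] at hO
        exact ⟨e / 2, by omega⟩
      have hmuZ : (mu : ℤ) = m + 1 := by omega
      have hlamZ : (lam : ℤ) = m + 1 + 2 * u := by omega
      have hdZ : (d : ℤ) = 2 * u := by omega
      have hSZ : (S : ℤ) = 2 * m + 4 * u + 2 * w + 1 := by omega
      refine hbuild (m + u + w + 1) d (m + u + w) ((mu : ℤ) - 1) (lam : ℤ)
        (2 * (lam : ℤ) - mu - 1) ((mu : ℤ) - 1) (by omega) ?_ ?_ ?_ ?_ rfl hA.symm hB.symm ?_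
      · simp only [Finset.mem_Icc]; omega
      · simp only [Finset.mem_Icc]; omega
      · simp only [Finset.mem_Icc]; omega
      · simp only [Finset.mem_Icc]; omega
      · push_cast
        rw [hmuZ, hlamZ, hdZ, hSZ]
        ring
  refine ⟨hpart1, ?_⟩
  intro χ
  obtain ⟨x, y, hx, hy, hsum, hcol⟩ := hpart1 (fun z => χ (z + 1))
  have hSc : (∑ i, (a i : ℤ)) = (S : ℤ) := by rw [hS]; push_cast; rfl
  refine ⟨fun i => x i + 1, y + 1, ?_, ?_, ?_, ?_⟩
  · intro i
    have := hx i
    simp only [Finset.mem_Icc] at this ⊢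
    omega
  · simp only [Finset.mem_Icc] at hy ⊢
    omega
  · have hexp : ∑ i, (a i : ℤ) * (x i + 1) = (∑ i, (a i : ℤ) * x i) + ∑ i, (a i : ℤ) := by
      rw [← Finset.sum_add_distrib]
      exact Finset.sum_congr rfl fun i _ => by ring
    rw [hexp, hSc, hc]
    linear_combination hsum
  · intro i
    exact hcol i
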